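/- Let 0 < λ < (√5 − 1)/2 and let K be the attractor of the IFS {f_1(x) = λx, f_2(x) = λ²x + 1 − λ²}. Then K ∪ (K + λ^{−2} − 1) is the attractor of the IFS {g_1(x) = λ²x, g_2(x) = λ³x, g_3(x) = λ²x + λ^{−2} − 1, g_4(x) = λ³x + λ^{−2} − 1}; in particular K ∪ (K + λ^{−2} − 1) is a self-similar set. -/
import Mathlib

/-- A set `S ⊆ ℝ` is self-similar if it is the attractor (unique nonempty compact
invariant set) of a finite IFS of contractive similitudes on `ℝ`. -/
def IsSelfSimilar (S : Set ℝ) : Prop :=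
  S.Nonempty ∧ IsCompact S ∧
    ∃ (n : ℕ) (r a : Fin n → ℝ), 0 < n ∧ (∀ i, r i ≠ 0 ∧ |r i| < 1) ∧
      S = ⋃ i, (fun x => r i * x + a i) '' S

lemma key_union (lam : ℝ) (hl : lam ≠ 0) (K : Set ℝ)
    (hK : K = (fun x => lam * x) '' K ∪ (fun x => lam ^ 2 * x + (1 - lam ^ 2)) '' K) :
    (fun x => lam ^ 2 * x) '' (K ∪ (fun x => x + (lam ^ 2)⁻¹ - 1) '' K) ∪
      (fun x => lam ^ 3 * x) '' (K ∪ (fun x => x + (lam ^ 2)⁻¹ - 1) '' K) = K := by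
  have h1 : ∀ y ∈ K, lam * y ∈ K := by
    intro y hy; rw [hK]; exact Or.inl ⟨y, hy, rfl⟩
  have h2 : ∀ y ∈ K, lam ^ 2 * y + (1 - lam ^ 2) ∈ K := by
    intro y hy; rw [hK]; exact Or.inr ⟨y, hy, rfl⟩
  have hmem : ∀ x ∈ K, (∃ y ∈ K, x = lam * y) ∨
      (∃ y ∈ K, x = lam ^ 2 * y + (1 - lam ^ 2)) := by
    intro x hx
    rw [hK] at hx
    rcases hx with ⟨y, hy, rfl⟩ | ⟨y, hy, rfl⟩
    · exact Or.inl ⟨y, hy, rfl⟩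
    · exact Or.inr ⟨y, hy, rfl⟩
  ext x
  constructor
  · rintro (⟨y, hy | ⟨z, hz, rfl⟩, rfl⟩ | ⟨y, hy | ⟨z, hz, rfl⟩, rfl⟩)
    · show lam ^ 2 * y ∈ K
      have e : lam ^ 2 * y = lam * (lam * y) := by ring
      rw [e]; exact h1 _ (h1 _ hy)
    · show lam ^ 2 * (z + (lam ^ 2)⁻¹ - 1) ∈ K
      have e : lam ^ 2 * (z + (lam ^ 2)⁻¹ - 1) = lam ^ 2 * z + (1 - lam ^ 2) := by
        field_simp; ring
      rw [e]; exact h2 _ hz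
    · show lam ^ 3 * y ∈ K
      have e : lam ^ 3 * y = lam * (lam * (lam * y)) := by ring
      rw [e]; exact h1 _ (h1 _ (h1 _ hy))
    · show lam ^ 3 * (z + (lam ^ 2)⁻¹ - 1) ∈ K
      have e : lam ^ 3 * (z + (lam ^ 2)⁻¹ - 1) = lam * (lam ^ 2 * z + (1 - lam ^ 2)) := by
        field_simp; ring
      rw [e]; exact h1 _ (h2 _ hz)
  · intro hx
    rcases hmem x hx with ⟨y, hy, rfl⟩ | ⟨y, hy, rfl⟩
    · rcases hmem y hy with ⟨z, hz, rfl⟩ | ⟨z, hz, rfl⟩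
      · exact Or.inl ⟨z, Or.inl hz, by ring⟩
      · refine Or.inr ⟨z + (lam ^ 2)⁻¹ - 1, Or.inr ⟨z, hz, rfl⟩, ?_⟩
        field_simp; ring
    · refine Or.inl ⟨y + (lam ^ 2)⁻¹ - 1, Or.inr ⟨y, hy, rfl⟩, ?_⟩
      field_simp; ring

theorem stmt_10 (lam : ℝ) (hlam : 0 < lam ∧ lam < (Real.sqrt 5 - 1) / 2)
    (K : Set ℝ) (hne : K.Nonempty) (hcpt : IsCompact K)
    (hK : K = (fun x => lam * x) '' K ∪ (fun x => lam ^ 2 * x + (1 - lam ^ 2)) '' K) :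
    (K ∪ (fun x => x + (lam ^ 2)⁻¹ - 1) '' K) =
        (fun x => lam ^ 2 * x) '' (K ∪ (fun x => x + (lam ^ 2)⁻¹ - 1) '' K) ∪
        (fun x => lam ^ 3 * x) '' (K ∪ (fun x => x + (lam ^ 2)⁻¹ - 1) '' K) ∪
        (fun x => lam ^ 2 * x + ((lam ^ 2)⁻¹ - 1)) '' (K ∪ (fun x => x + (lam ^ 2)⁻¹ - 1) '' K) ∪
        (fun x => lam ^ 3 * x + ((lam ^ 2)⁻¹ - 1)) '' (K ∪ (fun x => x + (lam ^ 2)⁻¹ - 1) '' K) ∧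
      IsSelfSimilar (K ∪ (fun x => x + (lam ^ 2)⁻¹ - 1) '' K) := by
  obtain ⟨hpos, hub⟩ := hlam
  have hl : lam ≠ 0 := ne_of_gt hpos
  have hlt1 : lam < 1 := by
    have h5 : Real.sqrt 5 < 3 := by
      nlinarith [Real.sq_sqrt (by norm_num : (0:ℝ) ≤ 5), Real.sqrt_nonneg 5]
    linarith
  set L := K ∪ (fun x => x + (lam ^ 2)⁻¹ - 1) '' K with hL
  have hA := key_union lam hl K hK
  rw [← hL] at hA
  have hB : (fun x => lam ^ 2 * x + ((lam ^ 2)⁻¹ - 1)) '' L ∪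
      (fun x => lam ^ 3 * x + ((lam ^ 2)⁻¹ - 1)) '' L =
      (fun x => x + (lam ^ 2)⁻¹ - 1) '' K := by
    have e2 : (fun x => lam ^ 2 * x + ((lam ^ 2)⁻¹ - 1)) '' L =
        (fun x => x + (lam ^ 2)⁻¹ - 1) '' ((fun x => lam ^ 2 * x) '' L) := by
      rw [Set.image_image]; apply Set.image_congr'; intro x; ring
    have e3 : (fun x => lam ^ 3 * x + ((lam ^ 2)⁻¹ - 1)) '' L =
        (fun x => x + (lam ^ 2)⁻¹ - 1) '' ((fun x => lam ^ 3 * x) '' L) := by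
      rw [Set.image_image]; apply Set.image_congr'; intro x; ring
    rw [e2, e3, ← Set.image_union, hA]
  have hmain : L = (fun x => lam ^ 2 * x) '' L ∪ (fun x => lam ^ 3 * x) '' L ∪
      (fun x => lam ^ 2 * x + ((lam ^ 2)⁻¹ - 1)) '' L ∪
      (fun x => lam ^ 3 * x + ((lam ^ 2)⁻¹ - 1)) '' L := by
    rw [Set.union_assoc ((fun x => lam ^ 2 * x) '' L ∪ (fun x => lam ^ 3 * x) '' L),
      hA, hB]
  refine ⟨hmain, hne.mono Set.subset_union_left, ?_, ?_⟩
  · exact hcpt.union (hcpt.image ((continuous_id.add continuous_const).sub continuous_const))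
  · refine ⟨4, ![lam ^ 2, lam ^ 3, lam ^ 2, lam ^ 3],
      ![0, 0, (lam ^ 2)⁻¹ - 1, (lam ^ 2)⁻¹ - 1], by norm_num, ?_, ?_⟩
    · intro i
      have h2 : |lam ^ 2| < 1 := by
        rw [abs_of_pos (by positivity)]
        calc lam ^ 2 ≤ lam ^ 1 := pow_le_pow_of_le_one hpos.le hlt1.le (by norm_num)
          _ < 1 := by simpa using hlt1
      have h3 : |lam ^ 3| < 1 := by
        rw [abs_of_pos (by positivity)]
        calc lam ^ 3 ≤ lam ^ 1 := pow_le_pow_of_le_one hpos.le hlt1.le (by norm_num)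
          _ < 1 := by simpa using hlt1
      fin_cases i
      · exact ⟨pow_ne_zero 2 hl, h2⟩
      · exact ⟨pow_ne_zero 3 hl, h3⟩
      · exact ⟨pow_ne_zero 2 hl, h2⟩
      · exact ⟨pow_ne_zero 3 hl, h3⟩
    · have hu : (⋃ i : Fin 4, (fun x => ![lam ^ 2, lam ^ 3, lam ^ 2, lam ^ 3] i * x +
          ![0, 0, (lam ^ 2)⁻¹ - 1, (lam ^ 2)⁻¹ - 1] i) '' L) =
          (fun x => lam ^ 2 * x) '' L ∪ (fun x => lam ^ 3 * x) '' L ∪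
          (fun x => lam ^ 2 * x + ((lam ^ 2)⁻¹ - 1)) '' L ∪
          (fun x => lam ^ 3 * x + ((lam ^ 2)⁻¹ - 1)) '' L := by
        ext x
        simp only [Set.mem_iUnion, Set.mem_union]
        constructor
        · rintro ⟨i, hi⟩
          fin_cases i
          · exact Or.inl (Or.inl (Or.inl (by simpa using hi)))
          · exact Or.inl (Or.inl (Or.inr (by simpa using hi)))
          · exact Or.inl (Or.inr (by simpa using hi))
          · exact Or.inr (by simpa using hi)
        · rintro (((h | h) | h) | h)
          · exact ⟨0, by simpa using h⟩
          · exact ⟨1, by simpa using h⟩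
          · exact ⟨2, by simpa using h⟩
          · exact ⟨3, by simpa using h⟩
      rw [hu, ← hmain]
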